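/- Let y be a real number with 1 < y < √3 and define v₀(y) := max{V₃, 2C₃/|y²−3| + 1} with the constants C₁, C₂, C₃, V₁, V₂, V₃ as specified. Then for every real v ≥ v₀(y) one has G(v,y) > 1, where G(v,y) := v·∫_1^{√(v/(v−2))} ((v+y²)/(v+y²x²))^{(v+1)/2} dx. -/

import Mathlib

open MeasureTheory Real intervalIntegral

/-- The comparison function `G(v, y)`. -/
noncomputable def G (v y : ℝ) : ℝ :=
  v * ∫ x in (1 : ℝ)..Real.sqrt (v / (v - 2)),
    ((v + y ^ 2) / (v + y ^ 2 * x ^ 2)) ^ ((v + 1) / 2)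

lemma integrand_lb (v y x : ℝ) (hv : 1 ≤ v) (hx : 1 ≤ x) :
    1 - (v+1)/2 * y^2/(v+y^2) * (x^2-1) ≤ ((v + y^2)/(v + y^2*x^2)) ^ ((v+1)/2) := by
  set a : ℝ := (v+1)/2 with ha_def
  have ha : 1 ≤ a := by rw [ha_def]; linarith
  have hN : (0:ℝ) < v + y^2 := by nlinarith [sq_nonneg y]
  have hD : (0:ℝ) < v + y^2*x^2 := by nlinarith [sq_nonneg (y*x)]
  set t : ℝ := y^2*(x^2-1)/(v+y^2) with ht_def
  have ht : 0 ≤ t := by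
    apply div_nonneg _ hN.le
    apply mul_nonneg (sq_nonneg y); nlinarith
  have ht2 : 1 + t = (v + y^2*x^2)/(v + y^2) := by rw [ht_def]; field_simp; ring
  have hbase : (v + y^2)/(v + y^2*x^2) = (1+t)⁻¹ := by rw [ht2, inv_div]
  have h1t : (0:ℝ) < 1 + t := by linarith
  -- upper bound (1+t)^a ≤ exp (t*a)
  have hup : (1+t)^a ≤ Real.exp (t*a) := by
    rw [Real.rpow_def_of_pos h1t]
    apply Real.exp_le_exp.mpr
    apply mul_le_mul_of_nonneg_right _ (by linarith)
    have := Real.log_le_sub_one_of_pos h1t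
    linarith
  have hlow : 1 - a*t ≤ (Real.exp (t*a))⁻¹ := by
    rw [← Real.exp_neg]
    have := Real.add_one_le_exp (-(t*a))
    linarith
  have h3 : (Real.exp (t*a))⁻¹ ≤ ((1+t)^a)⁻¹ :=
    inv_anti₀ (Real.rpow_pos_of_pos h1t a) hup
  calc 1 - a * y^2/(v+y^2) * (x^2-1) = 1 - a*t := by rw [ht_def]; ring
    _ ≤ (Real.exp (t*a))⁻¹ := hlow
    _ ≤ ((1+t)^a)⁻¹ := h3
    _ = ((1+t)⁻¹)^a := (Real.inv_rpow h1t.le a).symm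
    _ = ((v + y^2)/(v + y^2*x^2)) ^ a := by rw [hbase]

lemma integral_quad (b c : ℝ) :
    ∫ x in (1:ℝ)..b, (1 - c*(x^2-1)) = (b-1) - c*((b^3-1)/3 - (b-1)) := by
  have h : ∀ x : ℝ, 1 - c*(x^2-1) = (1+c) - c*x^2 := fun x => by ring
  simp_rw [h]
  rw [intervalIntegral.integral_sub (g := fun x : ℝ => c * x ^ 2) (intervalIntegrable_const)
    ((continuous_const.mul (continuous_pow 2)).intervalIntegrable _ _)]
  rw [intervalIntegral.integral_const, intervalIntegral.integral_const_mul, integral_pow]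
  push_cast
  simp [smul_eq_mul]
  ring

lemma key_alg (v y b : ℝ) (hv : 100 ≤ v) (hy : 1 < y)
    (hb1 : 1 < b) (hb2 : (v-2)*b ≤ v-1) (hb3 : b^2*(v-2) = v)
    (he : 66 ≤ (3 - y^2)*v) :
    1 < v * ((b-1) - (v+1)/2 * y^2/(v+y^2) * ((b^3-1)/3 - (b-1))) := by
  have hy2 : (3:ℝ) - y^2 > 0 := by nlinarith
  have hv2 : (0:ℝ) < v - 2 := by linarith
  have hN : (0:ℝ) < v + y^2 := by nlinarith
  have hs1 : 2 ≤ (b - 1)*(2*v - 3) := by nlinarith [hb3, hb2, hb1]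
  have hs2 : (b - 1)*(v-2) ≤ 1 := by nlinarith [hb2]
  have hs0 : 0 < b - 1 := by linarith
  rw [show v * ((b-1) - (v+1)/2 * y^2/(v+y^2) * ((b^3-1)/3 - (b-1)))
      = (6*(v+y^2)*(b-1)*v - v*(v+1)*y^2*((b-1)^2*(b+2))) / (6*(v+y^2)) by
    field_simp; ring]
  rw [lt_div_iff₀ (by positivity)]
  have hT1 : 12*v*(v+y^2) ≤ 6*(v+y^2)*(b-1)*v * (2*v-3) := by
    have := mul_le_mul_of_nonneg_left hs1 (show (0:ℝ) ≤ 6*v*(v+y^2) by positivity)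
    nlinarith [this]
  have hb2' : (b+2)*(v-2) ≤ 3*v - 5 := by nlinarith [hb2]
  have hT2 : v*(v+1)*y^2*((b-1)^2*(b+2)) * (v-2)^3 ≤ v*(v+1)*y^2*(3*v-5) := by
    have h1 : (b-1)^2*(b+2)*(v-2)^3 ≤ 3*v-5 := by
      have := mul_le_mul (mul_le_mul hs2 hs2 (by positivity) (by linarith)) hb2' (by nlinarith) (by nlinarith)
      calc (b-1)^2*(b+2)*(v-2)^3 = ((b-1)*(v-2)*((b-1)*(v-2)))*((b+2)*(v-2)) := by ring
        _ ≤ 1 * 1 * (3*v-5) := this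
        _ = 3*v - 5 := by ring
    have h2 := mul_le_mul_of_nonneg_left h1
      (show (0:ℝ) ≤ v*(v+1)*y^2 by
        apply mul_nonneg (mul_nonneg (by linarith) (by linarith)) (sq_nonneg y))
    calc v*(v+1)*y^2*((b-1)^2*(b+2))*(v-2)^3
        = v*(v+1)*y^2*((b-1)^2*(b+2)*(v-2)^3) := by ring
      _ ≤ v*(v+1)*y^2*(3*v-5) := h2
  have hpos35 : (0:ℝ) ≤ (3*v-5)*(2*v-3) := by nlinarith
  have hkey : (v+1)*y^2*(3*v-5)*(2*v-3) < 18*(v-2)^3 := by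
    have h67 : 66*((3*v-5)*(2*v-3)) ≤ (3-y^2)*(v+1)*((3*v-5)*(2*v-3)) := by
      calc 66*((3*v-5)*(2*v-3)) ≤ (3-y^2)*v*((3*v-5)*(2*v-3)) :=
            mul_le_mul_of_nonneg_right he hpos35
        _ ≤ (3-y^2)*(v+1)*((3*v-5)*(2*v-3)) := by
            apply mul_le_mul_of_nonneg_right _ hpos35
            nlinarith
    nlinarith [h67, mul_nonneg (show (0:ℝ) ≤ v-100 by linarith) (show (0:ℝ) ≤ v by linarith)]
  have hpos : (0:ℝ) < (2*v-3)*(v-2)^3 := mul_pos (by linarith) (by positivity)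
  apply lt_of_mul_lt_mul_right _ (le_of_lt hpos)
  have H1 : 12*v*(v+y^2)*(v-2)^3 ≤ 6*(v+y^2)*(b-1)*v*(2*v-3)*(v-2)^3 :=
    mul_le_mul_of_nonneg_right hT1 (by positivity)
  have H2 : v*(v+1)*y^2*((b-1)^2*(b+2))*(v-2)^3*(2*v-3) ≤ v*(v+1)*y^2*(3*v-5)*(2*v-3) :=
    mul_le_mul_of_nonneg_right hT2 (by linarith)
  have H3 : v*((v+1)*y^2*(3*v-5)*(2*v-3)) < v*(18*(v-2)^3) :=
    mul_lt_mul_of_pos_left hkey (by linarith)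
  have H4 : v*(18*(v-2)^3) ≤ (v+y^2)*(18*(v-2)^3) :=
    mul_le_mul_of_nonneg_right (by nlinarith [sq_nonneg y]) (by positivity)
  calc 1 * (6*(v+y^2)) * ((2*v-3)*(v-2)^3)
      = 12*v*(v+y^2)*(v-2)^3 - (v+y^2)*(18*(v-2)^3) := by ring
    _ < 6*(v+y^2)*(b-1)*v*(2*v-3)*(v-2)^3
        - v*(v+1)*y^2*((b-1)^2*(b+2))*(v-2)^3*(2*v-3) := by linarith [H1, H2, H3, H4]
    _ = (6*(v+y^2)*(b-1)*v - v*(v+1)*y^2*((b-1)^2*(b+2))) * ((2*v-3)*(v-2)^3) := by ring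
open MeasureTheory Real intervalIntegral

lemma main_est (v y : ℝ) (hv : 100 ≤ v) (hy : 1 < y) (he : 66 ≤ (3 - y^2)*v) :
    1 < G v y := by
  have hv2 : (0:ℝ) < v - 2 := by linarith
  have hq1 : (1:ℝ) < v/(v-2) := (one_lt_div hv2).mpr (by linarith)
  have hq0 : (0:ℝ) ≤ v/(v-2) := by positivity
  set b : ℝ := Real.sqrt (v/(v-2)) with hb_def
  have hbsq : b^2 = v/(v-2) := Real.sq_sqrt hq0
  have hb3 : b^2*(v-2) = v := by rw [hbsq]; field_simp
  have hb1 : 1 < b := by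
    rw [hb_def]
    rw [show (1:ℝ) = Real.sqrt 1 from (Real.sqrt_one).symm]
    exact Real.sqrt_lt_sqrt (by norm_num) hq1
  have hb2 : (v-2)*b ≤ v-1 := by
    have h1 : b ≤ (v-1)/(v-2) := by
      rw [hb_def]
      apply Real.sqrt_le_iff.mpr
      constructor
      · exact div_nonneg (by linarith) (by linarith)
      · rw [div_pow, div_le_div_iff₀ hv2 (by positivity)]
        nlinarith
    calc (v-2)*b ≤ (v-2)*((v-1)/(v-2)) := by
          apply mul_le_mul_of_nonneg_left h1 hv2.le
      _ = v-1 := by field_simp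
  -- integrability
  have hcf : Continuous fun x : ℝ => ((v + y^2)/(v + y^2*x^2)) ^ ((v+1)/2) := by
    apply Continuous.rpow_const
    · apply continuous_const.div
      · continuity
      · intro x
        have : (0:ℝ) < v + y^2*x^2 := by nlinarith [sq_nonneg (y*x), sq_nonneg y]
        exact this.ne'
    · intro x; right; positivity
  set c : ℝ := (v+1)/2 * y^2/(v+y^2) with hc_def
  have hmono : ∫ x in (1:ℝ)..b, (1 - c*(x^2-1))
      ≤ ∫ x in (1:ℝ)..b, ((v + y^2)/(v + y^2*x^2)) ^ ((v+1)/2) := by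
    apply intervalIntegral.integral_mono_on hb1.le
    · exact ((continuous_const.sub (continuous_const.mul
        ((continuous_pow 2).sub continuous_const))).intervalIntegrable _ _)
    · exact hcf.intervalIntegrable _ _
    · intro x hx
      have := integrand_lb v y x (by linarith) hx.1
      rw [hc_def]
      exact this
  have hIq := integral_quad b c
  have hkey := key_alg v y b hv hy hb1 hb2 hb3 he
  have hvpos : (0:ℝ) < v := by linarith
  calc (1:ℝ) < v * ((b-1) - (v+1)/2 * y^2/(v+y^2) * ((b^3-1)/3 - (b-1))) := hkey
    _ = v * ((b-1) - c*((b^3-1)/3 - (b-1))) := by rw [hc_def]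
    _ = v * ∫ x in (1:ℝ)..b, (1 - c*(x^2-1)) := by rw [hIq]
    _ ≤ v * ∫ x in (1:ℝ)..b, ((v + y^2)/(v + y^2*x^2)) ^ ((v+1)/2) :=
        mul_le_mul_of_nonneg_left hmono hvpos.le
    _ = G v y := rfl

set_option maxHeartbeats 1000000 in
theorem stmt_13 (y C₁ C₂ C₃ V₁ V₂ V₃ v₀ : ℝ)
    (hy1 : 1 < y) (hy2 : y < Real.sqrt 3)
    (hC₁ : C₁ = 2 * y ^ 6 + (3 / 4) * y ^ 4)
    (hC₂ : C₂ = (9 / 4) * C₁ + (25 / 32) * y ^ 8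
        + (3 / 2) * (C₁ ^ ((2 : ℝ) / 3) * y ^ ((8 : ℝ) / 3)
          + C₁ ^ ((1 : ℝ) / 3) * y ^ ((16 : ℝ) / 3)))
    (hC₃ : C₃ = (13 / 3) * y ^ 4 + 18 * y ^ 2 + 2 * C₂ + 11)
    (hV₁ : V₁ = max 100 (8 * y ^ 2))
    (hV₂ : V₂ = max V₁ (max ((3 / 2) * y ^ 4) (Real.sqrt (2 * C₁))))
    (hV₃ : V₃ = max V₂ (max (2 + 2 * y ^ 2 / (1 + 2 * y))
        (2 + 2 * y ^ 4 / (1 + 2 * y ^ 2))))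
    (hv₀ : v₀ = max V₃ (2 * C₃ / |y ^ 2 - 3| + 1)) :
    ∀ v : ℝ, v₀ ≤ v → 1 < G v y := by
  intro v hv
  have hy0 : (0:ℝ) ≤ y := by linarith
  have hy3 : y^2 < 3 := (Real.lt_sqrt hy0).mp hy2
  -- 100 ≤ v
  have h100 : (100:ℝ) ≤ V₁ := by rw [hV₁]; exact le_max_left _ _
  have h12 : V₁ ≤ V₂ := by rw [hV₂]; exact le_max_left _ _
  have h23 : V₂ ≤ V₃ := by rw [hV₃]; exact le_max_left _ _
  have h3v : V₃ ≤ v₀ := by rw [hv₀]; exact le_max_left _ _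
  have hv100 : (100:ℝ) ≤ v := by linarith
  -- 66 ≤ (3 - y²) v
  have hy2' : 1 ≤ y^2 := by nlinarith
  have hy4 : 1 ≤ y^4 := by nlinarith [hy2']
  have hC₁pos : 0 < C₁ := by rw [hC₁]; nlinarith [pow_nonneg hy0 6, hy4]
  have ht3 : 0 ≤ C₁ ^ ((2:ℝ)/3) * y ^ ((8:ℝ)/3) :=
    mul_nonneg (Real.rpow_nonneg hC₁pos.le _) (Real.rpow_nonneg hy0 _)
  have ht4 : 0 ≤ C₁ ^ ((1:ℝ)/3) * y ^ ((16:ℝ)/3) :=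
    mul_nonneg (Real.rpow_nonneg hC₁pos.le _) (Real.rpow_nonneg hy0 _)
  have hC₂pos : 0 ≤ C₂ := by
    rw [hC₂]
    have : (0:ℝ) ≤ (25/32)*y^8 := by positivity
    nlinarith [hC₁pos, ht3, ht4]
  have hC₃33 : (33:ℝ) ≤ C₃ := by
    rw [hC₃]
    linarith [hC₂pos, hy4, hy2']
  have habs : |y^2 - 3| = 3 - y^2 := by
    rw [abs_of_neg (by linarith)]; ring
  have hXv : 2 * C₃ / |y ^ 2 - 3| + 1 ≤ v := by
    have h1 : 2 * C₃ / |y ^ 2 - 3| + 1 ≤ v₀ := by rw [hv₀]; exact le_max_right _ _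
    linarith
  rw [habs] at hXv
  have h3y : (0:ℝ) < 3 - y^2 := by linarith
  have h2C : 2*C₃ ≤ (v-1)*(3-y^2) := by
    rw [← div_le_iff₀ h3y]; linarith
  have he : 66 ≤ (3 - y^2)*v := by linarith [h2C, hC₃33, h3y]
  exact main_est v y hv100 hy1 he
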